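/- Let 𝒴 be a finite linearly ordered set and let Q, Q' : 𝒴 → (0,1] be strictly positive probability mass functions on 𝒴. Let γ ∈ (0,1) and η ∈ (−1,∞), let (w_k)_{k≥1} be the truncated negative binomial distribution D_{η,γ} with mean m and probability generating function φ, and define A(y) = φ(Q(≤y)) − φ(Q(<y)) and A'(y) = φ(Q'(≤y)) − φ(Q'(<y)). Let ε₀ ≥ 0 and δ₀ ≥ 0 and suppose ∑_y max(Q(y) − e^{ε₀} Q'(y), 0) ≤ δ₀ and ∑_y max(Q'(y) − e^{ε₀} Q(y), 0) ≤ δ₀. Then with ε = (η+2)·ε₀ + (η+1)·δ₀/γ one has ∑_{y∈𝒴} max(A(y) − e^{ε}·A'(y), 0) ≤ m·δ₀. -/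

import Mathlib

open Finset Real

/-- Cumulative mass `Q(≤ y)` of a pmf on a finite linearly ordered set. -/
noncomputable def cumLE {Y : Type*} [Fintype Y] [LinearOrder Y] (Q : Y → ℝ) (y : Y) : ℝ :=
  ∑ z ∈ Finset.univ.filter (fun z => z ≤ y), Q z

/-- Cumulative mass `Q(< y)` of a pmf on a finite linearly ordered set. -/
noncomputable def cumLT {Y : Type*} [Fintype Y] [LinearOrder Y] (Q : Y → ℝ) (y : Y) : ℝ :=
  ∑ z ∈ Finset.univ.filter (fun z => z < y), Q z

/-- The pmf of the truncated negative binomial distribution `D_{η,γ}` (supported on `k ≥ 1`). -/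
noncomputable def negBinPMF (η γ : ℝ) (k : ℕ) : ℝ :=
  if k = 0 then 0
  else if η = 0 then (1 - γ) ^ k / (k * Real.log (1 / γ))
  else (1 - γ) ^ k / (γ ^ (-η) - 1) * ∏ i ∈ Finset.range k, ((i + η) / (i + 1))

/-- The mean of the truncated negative binomial distribution `D_{η,γ}`. -/
noncomputable def negBinMean (η γ : ℝ) : ℝ :=
  if η = 0 then (1 / γ - 1) / Real.log (1 / γ)
  else η * (1 - γ) / (γ * (1 - γ ^ η))

/-- The probability generating function of a distribution `w` on ℕ. -/
noncomputable def pgf (w : ℕ → ℝ) (z : ℝ) : ℝ := ∑' k : ℕ, w k * z ^ k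

/-- Binomial series coefficient. -/
noncomputable def aCoef (η : ℝ) (k : ℕ) : ℝ := ∏ i ∈ Finset.range k, ((i + η) / (i + 1))

lemma aCoef_zero (η : ℝ) : aCoef η 0 = 1 := by simp [aCoef]

lemma aCoef_succ (η : ℝ) (k : ℕ) : aCoef η (k + 1) = aCoef η k * ((k + η) / (k + 1)) := by
  rw [aCoef, aCoef, Finset.prod_range_succ]

lemma abs_aCoef_le (η : ℝ) (d : ℕ) (hd : |η| ≤ d) (k : ℕ) :
    |aCoef η k| ≤ (k + 1 : ℝ) ^ d := by
  induction k with
  | zero => simp [aCoef_zero]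
  | succ k ih =>
    rw [aCoef_succ, abs_mul, abs_div]
    have hk1 : (0:ℝ) < (k:ℝ) + 1 := by positivity
    have h1 : |(k:ℝ) + η| ≤ ((k:ℝ) + 1) + d := by
      calc |(k:ℝ) + η| ≤ |(k:ℝ)| + |η| := abs_add_le _ _
        _ ≤ ((k:ℝ) + 1) + d := by
            rw [abs_of_nonneg (by positivity : (0:ℝ) ≤ (k:ℝ))]; linarith
    have h2 : |(k:ℝ) + 1| = (k:ℝ) + 1 := abs_of_pos hk1
    have hinv : (0:ℝ) ≤ 1 / ((k:ℝ) + 1) := by positivity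
    have hber : (1 : ℝ) + d * (1 / ((k:ℝ) + 1)) ≤ (1 + 1 / ((k:ℝ) + 1)) ^ d :=
      one_add_mul_le_pow (by linarith) d
    have hkey : ((k:ℝ) + 1) ^ d * (((k:ℝ) + 1) + d) ≤ ((k:ℝ) + 2) ^ d * ((k:ℝ) + 1) := by
      have h3 : ((k:ℝ) + 2) ^ d = ((k:ℝ) + 1) ^ d * (1 + 1 / ((k:ℝ) + 1)) ^ d := by
        rw [← mul_pow]; congr 1; field_simp; try ring
      have hp : (0:ℝ) ≤ ((k:ℝ)+1)^d := by positivity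
      have h4 : (1 + (d:ℝ) * (1/((k:ℝ)+1))) * ((k:ℝ)+1) = ((k:ℝ) + 1) + d := by
        field_simp; try ring
      rw [h3]
      calc ((k:ℝ) + 1) ^ d * (((k:ℝ) + 1) + d)
          = ((k:ℝ)+1)^d * ((1 + (d:ℝ) * (1/((k:ℝ)+1))) * ((k:ℝ)+1)) := by rw [h4]
        _ ≤ ((k:ℝ)+1)^d * ((1 + 1/((k:ℝ)+1)) ^ d * ((k:ℝ)+1)) := by
            apply mul_le_mul_of_nonneg_left _ hp
            exact mul_le_mul_of_nonneg_right hber (le_of_lt hk1)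
        _ = ((k:ℝ)+1)^d * (1 + 1/((k:ℝ)+1)) ^ d * ((k:ℝ)+1) := by ring
    have step1 : |aCoef η k| * (|((k:ℝ) + η)| / |((k:ℝ) + 1)|)
        ≤ ((k:ℝ)+1)^d * ((((k:ℝ) + 1) + d) / ((k:ℝ)+1)) := by
      apply mul_le_mul ih _ (by positivity) (by positivity)
      rw [h2]
      gcongr
    have step2 : ((k:ℝ)+1)^d * ((((k:ℝ) + 1) + d) / ((k:ℝ)+1)) ≤ ((k:ℝ)+2)^d := by
      rw [mul_div_assoc'] at *
      rw [div_le_iff₀ hk1]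
      linarith [hkey]
    have : ((k + 1 : ℕ) + 1 : ℝ) = (k:ℝ) + 2 := by push_cast; ring
    rw [this]
    exact step1.trans step2

lemma summable_pow_succ_mul_geometric (j : ℕ) {r : ℝ} (h0 : 0 ≤ r) (hr : r < 1) :
    Summable (fun k : ℕ => ((k:ℝ) + 1) ^ j * r ^ k) := by
  have hre : ∀ k : ℕ, ((k:ℝ) + 1) ^ j * r ^ k
      = ∑ i ∈ Finset.range (j + 1), (j.choose i : ℝ) * ((k:ℝ) ^ i * r ^ k) := by
    intro k
    rw [add_pow, Finset.sum_mul]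
    refine Finset.sum_congr rfl fun i _ => by ring
  simp only [hre]
  apply summable_sum
  intro i _
  exact ((summable_pow_mul_geometric_of_norm_lt_one (R := ℝ) i (r := r)
    (by rwa [Real.norm_eq_abs, abs_of_nonneg h0])).mul_left _)

lemma summable_master (η : ℝ) {r : ℝ} (h0 : 0 ≤ r) (hr : r < 1) :
    Summable (fun k : ℕ => |aCoef η k| * ((k:ℝ) + 1) ^ 2 * r ^ k) := by
  set d : ℕ := ⌈|η|⌉₊ with hd
  have hηd : |η| ≤ (d:ℝ) := Nat.le_ceil _
  refine Summable.of_nonneg_of_le (fun k => by positivity) (fun k => ?_)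
    (summable_pow_succ_mul_geometric (d + 2) h0 hr)
  ·
    have h1 : |aCoef η k| * ((k:ℝ) + 1) ^ 2 ≤ ((k:ℝ) + 1) ^ d * ((k:ℝ) + 1) ^ 2 :=
      mul_le_mul_of_nonneg_right (abs_aCoef_le η d hηd k) (by positivity)
    have h2 : ((k:ℝ) + 1) ^ d * ((k:ℝ) + 1) ^ 2 = ((k:ℝ) + 1) ^ (d + 2) := by
      rw [← pow_add]
    calc |aCoef η k| * ((k:ℝ) + 1) ^ 2 * r ^ k
        ≤ ((k:ℝ) + 1) ^ (d + 2) * r ^ k := by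
          apply mul_le_mul_of_nonneg_right _ (by positivity)
          rw [← h2]; exact h1
      _ = _ := rfl

lemma summable_a_pow (η : ℝ) {t : ℝ} (ht : |t| < 1) :
    Summable (fun k : ℕ => aCoef η k * t ^ k) := by
  apply Summable.of_abs
  refine Summable.of_nonneg_of_le (fun k => abs_nonneg _) (fun k => ?_)
    (summable_master η (abs_nonneg t) ht)
  rw [abs_mul, abs_pow]
  have h1 : (1:ℝ) ≤ ((k:ℝ) + 1) ^ 2 := by nlinarith [sq_nonneg ((k:ℝ)), Nat.cast_nonneg (α := ℝ) k]
  nlinarith [abs_nonneg (aCoef η k), pow_nonneg (abs_nonneg t) k,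
    mul_le_mul_of_nonneg_right (mul_le_mul_of_nonneg_left h1 (abs_nonneg (aCoef η k)))
      (pow_nonneg (abs_nonneg t) k)]

lemma summable_a_k_pow (η : ℝ) {t : ℝ} (ht : |t| < 1) :
    Summable (fun k : ℕ => aCoef η k * ((k:ℝ) * t ^ k)) := by
  apply Summable.of_abs
  refine Summable.of_nonneg_of_le (fun k => abs_nonneg _) (fun k => ?_)
    (summable_master η (abs_nonneg t) ht)
  rw [abs_mul, abs_mul, abs_pow, abs_of_nonneg (by positivity : (0:ℝ) ≤ (k:ℝ))]
  have h1 : (k:ℝ) ≤ ((k:ℝ) + 1) ^ 2 := by nlinarith [sq_nonneg ((k:ℝ)), Nat.cast_nonneg (α := ℝ) k]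
  have := pow_nonneg (abs_nonneg t) k
  nlinarith [abs_nonneg (aCoef η k), mul_le_mul_of_nonneg_left h1 (abs_nonneg (aCoef η k))]

lemma summable_a_deriv (η : ℝ) {t : ℝ} (ht : |t| < 1) :
    Summable (fun k : ℕ => aCoef η k * ((k:ℝ) * t ^ (k - 1))) := by
  apply Summable.of_abs
  set r : ℝ := (1 + |t|) / 2 with hrdef
  have h0t : 0 ≤ |t| := abs_nonneg t
  have hrpos : 0 < r := by rw [hrdef]; linarith
  have hr1 : r < 1 := by rw [hrdef]; linarith
  have htr : |t| ≤ r := by rw [hrdef]; linarith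
  refine Summable.of_nonneg_of_le (fun k => abs_nonneg _) (fun k => ?_)
    ((summable_master η hrpos.le hr1).mul_right (1 / r))
  rw [abs_mul, abs_mul, abs_pow, abs_of_nonneg (by positivity : (0:ℝ) ≤ (k:ℝ))]
  match k with
  | 0 => simp; positivity
  | (k + 1) =>
    have e1 : (k + 1 - 1 : ℕ) = k := rfl
    rw [e1]
    push_cast
    have ha : (0:ℝ) ≤ |aCoef η (k+1)| := abs_nonneg _
    have h2 : |t| ^ k ≤ r ^ k := pow_le_pow_left₀ h0t htr k
    have hrk : r ^ (k + 1) * (1 / r) = r ^ k := by field_simp [pow_succ]; ring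
    have hA : |aCoef η (k+1)| * (((k:ℝ)+1) * |t| ^ k) ≤ |aCoef η (k+1)| * (((k:ℝ)+1) * r ^ k) := by
      apply mul_le_mul_of_nonneg_left _ ha
      exact mul_le_mul_of_nonneg_left h2 (by positivity)
    have hkk : ((k:ℝ)+1) ≤ ((k:ℝ)+1+1)^2 := by nlinarith [sq_nonneg ((k:ℝ)), Nat.cast_nonneg (α := ℝ) k]
    have hB : |aCoef η (k+1)| * (((k:ℝ)+1) * r ^ k) ≤ |aCoef η (k+1)| * (((k:ℝ)+1+1)^2 * r ^ k) := by
      apply mul_le_mul_of_nonneg_left _ ha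
      exact mul_le_mul_of_nonneg_right hkk (by positivity)
    calc |aCoef η (k+1)| * (((k:ℝ)+1) * |t| ^ k)
        ≤ |aCoef η (k+1)| * (((k:ℝ)+1+1)^2 * r ^ k) := hA.trans hB
      _ = |aCoef η (k+1)| * ((k:ℝ)+1+1)^2 * r ^ (k+1) * (1/r) := by
          rw [mul_assoc (|aCoef η (k+1)| * ((k:ℝ)+1+1)^2) (r^(k+1)) (1/r), hrk]; ring

noncomputable def binSum (η t : ℝ) : ℝ := ∑' k : ℕ, aCoef η k * t ^ k

lemma hasDerivAt_binSum (η : ℝ) {t : ℝ} (ht : |t| < 1) :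
    HasDerivAt (binSum η) (∑' k : ℕ, aCoef η k * ((k:ℝ) * t ^ (k - 1))) t := by
  set r : ℝ := (1 + |t|) / 2 with hrdef
  have h0t : 0 ≤ |t| := abs_nonneg t
  have hrpos : 0 < r := by rw [hrdef]; linarith
  have hr1 : r < 1 := by rw [hrdef]; linarith
  have htr : |t| < r := by rw [hrdef]; linarith
  have key : ∀ k : ℕ, ∀ y ∈ Set.Ioo (-r) r,
      ‖aCoef η k * ((k:ℝ) * y ^ (k - 1))‖ ≤ |aCoef η k| * ((k:ℝ) + 1) ^ 2 * r ^ k * (1 / r) := by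
    intro k y hy
    have hyr : |y| ≤ r := by
      rw [abs_le]; exact ⟨hy.1.le, hy.2.le⟩
    rw [Real.norm_eq_abs, abs_mul, abs_mul, abs_pow,
      abs_of_nonneg (by positivity : (0:ℝ) ≤ (k:ℝ))]
    match k with
    | 0 => simp; positivity
    | (k + 1) =>
      have e1 : (k + 1 - 1 : ℕ) = k := rfl
      rw [e1]
      push_cast
      have ha : (0:ℝ) ≤ |aCoef η (k+1)| := abs_nonneg _
      have h2 : |y| ^ k ≤ r ^ k := pow_le_pow_left₀ (abs_nonneg y) hyr k
      have hrk : r ^ (k + 1) * (1 / r) = r ^ k := by field_simp [pow_succ]; ring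
      have hkk : ((k:ℝ)+1) ≤ ((k:ℝ)+1+1)^2 := by
        nlinarith [sq_nonneg ((k:ℝ)), Nat.cast_nonneg (α := ℝ) k]
      have hA : |aCoef η (k+1)| * (((k:ℝ)+1) * |y| ^ k)
          ≤ |aCoef η (k+1)| * (((k:ℝ)+1+1)^2 * r ^ k) := by
        apply mul_le_mul_of_nonneg_left _ ha
        calc ((k:ℝ)+1) * |y| ^ k ≤ ((k:ℝ)+1) * r ^ k :=
              mul_le_mul_of_nonneg_left h2 (by positivity)
          _ ≤ ((k:ℝ)+1+1)^2 * r ^ k := mul_le_mul_of_nonneg_right hkk (by positivity)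
      calc |aCoef η (k+1)| * (((k:ℝ)+1) * |y| ^ k)
          ≤ |aCoef η (k+1)| * (((k:ℝ)+1+1)^2 * r ^ k) := hA
        _ = |aCoef η (k+1)| * ((k:ℝ)+1+1)^2 * r ^ (k+1) * (1/r) := by
            rw [mul_assoc (|aCoef η (k+1)| * ((k:ℝ)+1+1)^2) (r^(k+1)) (1/r), hrk]; ring
  exact hasDerivAt_tsum_of_isPreconnected
    ((summable_master η hrpos.le hr1).mul_right (1 / r))
    isOpen_Ioo (convex_Ioo _ _).isPreconnected
    (fun k y _ => by
      simpa using (hasDerivAt_pow k y).const_mul (aCoef η k))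
    key
    (Set.mem_Ioo.2 ⟨by linarith, hrpos⟩)
    (by
      apply summable_of_ne_finset_zero (s := ({0} : Finset ℕ))
      intro k hk
      have : k ≠ 0 := by simpa using hk
      simp [zero_pow this])
    (Set.mem_Ioo.2 ⟨by cases abs_lt.1 htr; linarith, (abs_lt.1 htr).2⟩)

lemma binSum_ode (η : ℝ) {t : ℝ} (ht : |t| < 1) :
    (1 - t) * (∑' k : ℕ, aCoef η k * ((k:ℝ) * t ^ (k - 1))) = η * binSum η t := by
  have hD := summable_a_deriv η ht
  have hT := summable_a_k_pow η ht
  have hS := summable_a_pow η ht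
  set D : ℝ := ∑' k : ℕ, aCoef η k * ((k:ℝ) * t ^ (k - 1)) with hDdef
  have hshift : D = ∑' k : ℕ, aCoef η k * (((k:ℝ) + η) * t ^ k) := by
    have hterm : ∀ k : ℕ, aCoef η (k+1) * ((((k+1):ℕ):ℝ) * t ^ (k + 1 - 1))
        = aCoef η k * (((k:ℝ) + η) * t ^ k) := by
      intro k
      have e1 : (k + 1 - 1 : ℕ) = k := rfl
      rw [e1, aCoef_succ]
      have hk1 : ((k:ℝ) + 1) ≠ 0 := by positivity
      push_cast
      field_simp
    rw [hDdef, hD.tsum_eq_zero_add]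
    simp only [Nat.cast_zero, zero_mul, mul_zero, zero_add]
    exact tsum_congr hterm
  have hsplit : ∑' k : ℕ, aCoef η k * (((k:ℝ) + η) * t ^ k)
      = (∑' k : ℕ, aCoef η k * ((k:ℝ) * t ^ k)) + η * binSum η t := by
    have : ∀ k : ℕ, aCoef η k * (((k:ℝ) + η) * t ^ k)
        = aCoef η k * ((k:ℝ) * t ^ k) + η * (aCoef η k * t ^ k) := fun k => by ring
    rw [tsum_congr this, hT.tsum_add (hS.mul_left η), tsum_mul_left]
    rfl
  have htD : t * D = ∑' k : ℕ, aCoef η k * ((k:ℝ) * t ^ k) := by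
    rw [hDdef, ← tsum_mul_left]
    apply tsum_congr
    intro k
    match k with
    | 0 => simp
    | (k+1) =>
      have e1 : (k + 1 - 1 : ℕ) = k := rfl
      rw [e1]
      rw [pow_succ]
      ring
  have : (1 - t) * D = D - t * D := by ring
  rw [this, htD, hshift, hsplit]
  ring

lemma binSum_zero (η : ℝ) : binSum η 0 = 1 := by
  rw [binSum, tsum_eq_single 0 (fun k hk => by simp [zero_pow hk])]
  simp [aCoef_zero]

lemma binSum_eq (η : ℝ) {t : ℝ} (h0 : 0 ≤ t) (ht : t < 1) :
    binSum η t = (1 - t) ^ (-η) := by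
  set g : ℝ → ℝ := fun s => binSum η s * (1 - s) ^ η with hg
  have habs : ∀ s : ℝ, s ∈ Set.Icc (0:ℝ) t → |s| < 1 := by
    intro s hs
    rw [abs_lt]
    constructor <;> [linarith [hs.1]; linarith [hs.2]]
  have hderiv : ∀ s : ℝ, |s| < 1 → HasDerivAt g 0 s := by
    intro s hs
    have h1s : (0:ℝ) < 1 - s := by have := (abs_lt.1 hs).2; linarith
    have hf := hasDerivAt_binSum η hs
    have hr : HasDerivAt (fun x : ℝ => (1 - x) ^ η) (η * (1 - s) ^ (η - 1) * (-1)) s := by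
      have hout : HasDerivAt (fun x : ℝ => x ^ η) (η * (1 - s) ^ (η - 1)) (1 - s) :=
        Real.hasDerivAt_rpow_const (Or.inl h1s.ne')
      have hin : HasDerivAt (fun x : ℝ => 1 - x) (-1) s := (hasDerivAt_id s).const_sub 1
      exact hout.comp s hin
    have hprod := hf.mul hr
    have hval : (∑' k : ℕ, aCoef η k * ((k:ℝ) * s ^ (k - 1))) * (1 - s) ^ η
        + binSum η s * (η * (1 - s) ^ (η - 1) * (-1)) = 0 := by
      have hpow : (1 - s) ^ η = (1 - s) ^ (η - 1) * (1 - s) := by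
        rw [← Real.rpow_add_one h1s.ne' (η - 1)]
        norm_num
      have hode := binSum_ode η hs
      rw [hpow]
      linear_combination (1 - s) ^ (η - 1) * hode
    rw [hval] at hprod
    exact hprod
  have hcont : ContinuousOn g (Set.Icc 0 t) := fun s hs =>
    ((hderiv s (habs s hs)).continuousAt).continuousWithinAt
  have hkey : g t = g 0 := by
    apply constant_of_has_deriv_right_zero hcont
    · intro s hs
      have hs' : |s| < 1 := habs s ⟨hs.1, hs.2.le⟩
      exact ((hderiv s hs').hasDerivWithinAt)
    · exact Set.right_mem_Icc.2 h0
  have hg0 : g 0 = 1 := by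
    rw [hg]
    simp [binSum_zero, Real.one_rpow]
  have h1t : (0:ℝ) < 1 - t := by linarith
  have hgt : binSum η t * (1 - t) ^ η = 1 := hkey.trans hg0
  have hne : (1 - t) ^ η ≠ 0 := (Real.rpow_pos_of_pos h1t η).ne'
  rw [Real.rpow_neg h1t.le]
  field_simp
  linarith [hgt]

/-- Closed form of the pgf of the truncated negative binomial distribution. -/
noncomputable def PhiNB (η γ x : ℝ) : ℝ :=
  if η = 0 then Real.log (1 - (1 - γ) * x) / Real.log γ
  else ((1 - (1 - γ) * x) ^ (-η) - 1) / (γ ^ (-η) - 1)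

/-- The constant such that `PhiNB' x = KNB * (1-(1-γ)x)^{-(η+1)}`. -/
noncomputable def KNB (η γ : ℝ) : ℝ :=
  if η = 0 then (1 - γ) / Real.log (1 / γ) else η * (1 - γ) / (γ ^ (-η) - 1)

section facts
variable {η γ : ℝ} (hγ0 : 0 < γ) (hγ1 : γ < 1) (hη : -1 < η)

lemma rpow_sign (hγ0 : 0 < γ) (hγ1 : γ < 1) (hηne : η ≠ 0) : 0 < η * (γ ^ (-η) - 1) := by
  rcases lt_or_gt_of_ne hηne with h | h
  · have : γ ^ (-η) < 1 := Real.rpow_lt_one hγ0.le hγ1 (by linarith)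
    nlinarith
  · have : 1 < γ ^ (-η) := by
      rw [Real.one_lt_rpow_iff_of_pos hγ0]
      right; exact ⟨hγ1, by linarith⟩
    nlinarith

lemma log_inv_gamma_pos (hγ0 : 0 < γ) (hγ1 : γ < 1) : 0 < Real.log (1 / γ) := by
  rw [one_div, Real.log_inv]
  have := Real.log_neg hγ0 hγ1
  linarith

lemma KNB_pos (hγ0 : 0 < γ) (hγ1 : γ < 1) : 0 < KNB η γ := by
  rw [KNB]
  split_ifs with h
  · exact div_pos (by linarith) (log_inv_gamma_pos hγ0 hγ1)
  · have h2 := rpow_sign hγ0 hγ1 h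
    rcases lt_or_gt_of_ne h with h1 | h1
    · have hd : γ ^ (-η) - 1 < 0 := by nlinarith
      have hn : η * (1 - γ) < 0 := by nlinarith
      exact div_pos_of_neg_of_neg hn hd
    · have hd : 0 < γ ^ (-η) - 1 := by nlinarith
      exact div_pos (by nlinarith) hd

lemma negBinMean_eq (hγ0 : 0 < γ) (hγ1 : γ < 1) :
    negBinMean η γ = KNB η γ * γ ^ (-(η + 1)) := by
  rw [negBinMean, KNB]
  have hγne : γ ≠ 0 := hγ0.ne'
  split_ifs with h
  · rw [h]; norm_num
    rw [Real.rpow_neg_one]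
    field_simp
  · have e1 : γ ^ (-(η + 1)) = γ ^ (-η) * γ⁻¹ := by
      rw [← Real.rpow_neg_one γ, ← Real.rpow_add hγ0]
      ring_nf
    have e2 : γ ^ (-η) = (γ ^ η)⁻¹ := Real.rpow_neg hγ0.le η ▸ rfl
    have hγη : 0 < γ ^ η := Real.rpow_pos_of_pos hγ0 η
    have hne2 : γ ^ (-η) - 1 ≠ 0 := by
      have := rpow_sign hγ0 hγ1 h
      intro hc
      rw [hc] at this
      simp at this
    have hne3 : 1 - γ ^ η ≠ 0 := by
      intro hc
      apply hne2
      rw [e2]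
      have : γ ^ η = 1 := by linarith
      rw [this]; norm_num
    rw [e1, e2]
    rw [e2] at hne2
    field_simp
end facts

lemma pgf_negBin_eq {η γ : ℝ} (hγ0 : 0 < γ) (hγ1 : γ < 1) {x : ℝ}
    (hx0 : 0 ≤ x) (hx1 : x ≤ 1) :
    pgf (negBinPMF η γ) x = PhiNB η γ x := by
  set t : ℝ := (1 - γ) * x with htdef
  have ht0 : 0 ≤ t := mul_nonneg (by linarith) hx0
  have ht1 : t < 1 := by nlinarith
  have htabs : |t| < 1 := by rw [abs_of_nonneg ht0]; exact ht1
  have h1t : (0:ℝ) < 1 - t := by linarith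
  rw [pgf, PhiNB]
  split_ifs with hη
  -- η = 0 : logarithmic series
  · have L := log_inv_gamma_pos hγ0 hγ1
    have hlog : HasSum (fun n : ℕ => t ^ (n + 1) / (n + 1)) (-Real.log (1 - t)) :=
      Real.hasSum_pow_div_log_of_abs_lt_one htabs
    have hlog2 : HasSum (fun n : ℕ => negBinPMF η γ (n + 1) * x ^ (n + 1))
        (-Real.log (1 - t) / Real.log (1 / γ)) := by
      have := hlog.div_const (Real.log (1 / γ))
      convert this using 2 with n
      · rfl
      unfold negBinPMF
      simp only [Nat.succ_ne_zero, if_false, hη, if_true]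
      rw [htdef, mul_pow]
      push_cast
      field_simp
    have hfull : HasSum (fun n : ℕ => negBinPMF η γ n * x ^ n)
        (-Real.log (1 - t) / Real.log (1 / γ)) := by
      refine (hasSum_nat_add_iff' 1).1 ?_
      simpa [negBinPMF] using hlog2
    rw [hfull.tsum_eq]
    have hlogγ : Real.log γ ≠ 0 := (Real.log_neg hγ0 hγ1).ne
    rw [one_div, Real.log_inv]
    rw [htdef]
    field_simp
  -- η ≠ 0 : binomial series
  · have hbin : HasSum (fun k : ℕ => aCoef η k * t ^ k) ((1 - t) ^ (-η)) := by
      have hs := summable_a_pow η htabs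
      have := hs.hasSum
      rwa [show ∑' k : ℕ, aCoef η k * t ^ k = (1 - t) ^ (-η) from binSum_eq η ht0 ht1] at this
    have hshift : HasSum (fun k : ℕ => aCoef η (k + 1) * t ^ (k + 1))
        ((1 - t) ^ (-η) - 1) := by
      have := (hasSum_nat_add_iff' 1).2 hbin
      simpa [aCoef_zero] using this
    have hc := hshift.div_const (γ ^ (-η) - 1)
    have hlog2 : HasSum (fun n : ℕ => negBinPMF η γ (n + 1) * x ^ (n + 1))
        (((1 - t) ^ (-η) - 1) / (γ ^ (-η) - 1)) := by
      convert hc using 2 with n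
      · rfl
      unfold negBinPMF
      simp only [Nat.succ_ne_zero, if_false, hη, if_false]
      rw [htdef, mul_pow, aCoef]
      ring
    have hfull : HasSum (fun n : ℕ => negBinPMF η γ n * x ^ n)
        (((1 - t) ^ (-η) - 1) / (γ ^ (-η) - 1)) := by
      refine (hasSum_nat_add_iff' 1).1 ?_
      simpa [negBinPMF] using hlog2
    rw [hfull.tsum_eq, htdef]

lemma hasDerivAt_PhiNB {η γ : ℝ} (hγ0 : 0 < γ) (hγ1 : γ < 1) {x : ℝ}
    (hx : 0 < 1 - (1 - γ) * x) :
    HasDerivAt (PhiNB η γ) (KNB η γ * (1 - (1 - γ) * x) ^ (-(η + 1))) x := by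
  have hin : HasDerivAt (fun y : ℝ => 1 - (1 - γ) * y) (-(1 - γ)) x := by
    simpa using ((hasDerivAt_id x).const_mul (1 - γ)).const_sub 1
  have hune : (1 - (1 - γ) * x) ≠ 0 := hx.ne'
  unfold PhiNB
  split_ifs with hη
  -- η = 0
  · have hlogγ : Real.log γ ≠ 0 := (Real.log_neg hγ0 hγ1).ne
    have hout : HasDerivAt Real.log (1 - (1 - γ) * x)⁻¹ (1 - (1 - γ) * x) :=
      Real.hasDerivAt_log hune
    have hcomp := (hout.comp x hin).div_const (Real.log γ)
    refine hcomp.congr_deriv ?_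
    rw [hη, KNB]
    simp only [if_true]
    rw [show (-(0 + 1) : ℝ) = -1 by norm_num, Real.rpow_neg_one]
    rw [one_div, Real.log_inv]
    field_simp
  -- η ≠ 0
  · have hout : HasDerivAt (fun y : ℝ => y ^ (-η)) (-η * (1 - (1 - γ) * x) ^ (-η - 1))
        (1 - (1 - γ) * x) := Real.hasDerivAt_rpow_const (Or.inl hune)
    have hcomp := ((hout.comp x hin).sub_const 1).div_const (γ ^ (-η) - 1)
    refine hcomp.congr_deriv ?_
    rw [KNB]
    simp only [hη, if_false]
    rw [show (-(η + 1) : ℝ) = -η - 1 by ring]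
    field_simp

lemma phi_diff_integral {η γ : ℝ} (hγ0 : 0 < γ) (hγ1 : γ < 1)
    {G q : ℝ} (hG0 : 0 ≤ G) (hq : 0 ≤ q) (hF1 : G + q ≤ 1) :
    PhiNB η γ (G + q) - PhiNB η γ G
      = ∫ t in (0:ℝ)..1, q * (KNB η γ * (1 - (1 - γ) * (G + t * q)) ^ (-(η + 1))) := by
  have hpos : ∀ t : ℝ, 0 ≤ t → t ≤ 1 → 0 < 1 - (1 - γ) * (G + t * q) := by
    intro t ht0 ht1
    have h1 : 0 ≤ G + t * q := by nlinarith
    have h2 : G + t * q ≤ 1 := by nlinarith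
    nlinarith
  have hderiv : ∀ t ∈ Set.uIcc (0:ℝ) 1,
      HasDerivAt (fun s : ℝ => PhiNB η γ (G + s * q))
        (q * (KNB η γ * (1 - (1 - γ) * (G + t * q)) ^ (-(η + 1)))) t := by
    intro t ht
    rw [Set.uIcc_of_le (by norm_num : (0:ℝ) ≤ 1)] at ht
    have hin : HasDerivAt (fun s : ℝ => G + s * q) q t := by
      simpa using ((hasDerivAt_id t).mul_const q).const_add G
    have hout := hasDerivAt_PhiNB (η := η) hγ0 hγ1 (x := G + t * q) (hpos t ht.1 ht.2)
    have := hout.comp t hin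
    exact this.congr_deriv (by ring)
  have hcont : ContinuousOn
      (fun t : ℝ => q * (KNB η γ * (1 - (1 - γ) * (G + t * q)) ^ (-(η + 1))))
      (Set.uIcc (0:ℝ) 1) := by
    apply ContinuousOn.mul continuousOn_const
    apply ContinuousOn.mul continuousOn_const
    apply ContinuousOn.rpow_const
    · fun_prop
    · intro t ht
      rw [Set.uIcc_of_le (by norm_num : (0:ℝ) ≤ 1)] at ht
      exact Or.inl (hpos t ht.1 ht.2).ne'
  have := intervalIntegral.integral_eq_sub_of_hasDerivAt hderiv
    (hcont.intervalIntegrable)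
  rw [this]
  norm_num

set_option maxHeartbeats 2000000 in
lemma per_point {η γ εz δz : ℝ} (hγ0 : 0 < γ) (hγ1 : γ < 1) (hη : -1 < η)
    (hε₀ : 0 ≤ εz) (hδ₀ : 0 ≤ δz)
    {q q' G G' R R' M : ℝ}
    (hq : 0 < q) (hq' : 0 < q') (hG0 : 0 ≤ G) (hG'0 : 0 ≤ G')
    (hR0 : 0 ≤ R) (hR'0 : 0 ≤ R')
    (hsum : G + q + R = 1) (hsum' : G' + q' + R' = 1)
    (hM : q - Real.exp εz * q' ≤ M) (hM0 : 0 ≤ M)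
    (htail : ∀ t : ℝ, 0 ≤ t → t ≤ 1 →
      R' + (1 - t) * q' ≤ Real.exp εz * (R + (1 - t) * q) + δz) :
    PhiNB η γ (G + q) - PhiNB η γ G
      ≤ Real.exp ((η + 2) * εz + (η + 1) * δz / γ)
          * (PhiNB η γ (G' + q') - PhiNB η γ G')
        + M * (KNB η γ * γ ^ (-(η + 1))) := by
  set K := KNB η γ with hK
  have hKpos : 0 < K := KNB_pos hγ0 hγ1
  set c : ℝ := εz + δz / γ with hc
  have hc0 : 0 ≤ c := by positivity
  have hεeq : (η + 2) * εz + (η + 1) * δz / γ = εz + (η + 1) * c := by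
    rw [hc]; field_simp; ring
  have ha0 : 0 < η + 1 := by linarith
  -- pointwise bound on integrands
  have hptwise : ∀ t : ℝ, 0 ≤ t → t ≤ 1 →
      q * (K * (1 - (1 - γ) * (G + t * q)) ^ (-(η + 1)))
        ≤ Real.exp ((η + 2) * εz + (η + 1) * δz / γ)
            * (q' * (K * (1 - (1 - γ) * (G' + t * q')) ^ (-(η + 1))))
          + M * (K * γ ^ (-(η + 1))) := by
    intro t ht0 ht1
    set u : ℝ := 1 - (1 - γ) * (G + t * q) with hu
    set u' : ℝ := 1 - (1 - γ) * (G' + t * q') with hu'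
    have hueq : u = γ + (1 - γ) * (R + (1 - t) * q) := by
      rw [hu]; linear_combination (γ - 1) * hsum
    have hu'eq : u' = γ + (1 - γ) * (R' + (1 - t) * q') := by
      rw [hu']; linear_combination (γ - 1) * hsum'
    clear_value u u'
    have hq1t : 0 ≤ (1 - t) * q := mul_nonneg (by linarith) hq.le
    have hq1t' : 0 ≤ (1 - t) * q' := mul_nonneg (by linarith) hq'.le
    have hnn : 0 ≤ (1 - γ) * (R + (1 - t) * q) :=
      mul_nonneg (by linarith) (by linarith)
    have hnn' : 0 ≤ (1 - γ) * (R' + (1 - t) * q') :=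
      mul_nonneg (by linarith) (by linarith)
    have huγ : γ ≤ u := by linarith [hueq]
    have hu'γ : γ ≤ u' := by linarith [hu'eq]
    have hu0 : 0 < u := lt_of_lt_of_le hγ0 huγ
    have hu'0 : 0 < u' := lt_of_lt_of_le hγ0 hu'γ
    have hexp1 : 1 ≤ Real.exp εz := by
      rw [← Real.exp_zero]; exact Real.exp_le_exp.2 hε₀
    -- u' ≤ exp c * u
    have key1 : u' ≤ Real.exp c * u := by
      have h1 : R' + (1 - t) * q' ≤ Real.exp εz * (R + (1 - t) * q) + δz :=
        htail t ht0 ht1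
      have hdg : 0 ≤ δz / γ := by positivity
      have h2 : u' ≤ Real.exp εz * u + δz := by
        have hmul : (1 - γ) * (R' + (1 - t) * q')
            ≤ (1 - γ) * (Real.exp εz * (R + (1 - t) * q) + δz) :=
          mul_le_mul_of_nonneg_left h1 (by linarith)
        have he2 : Real.exp εz * u
            = Real.exp εz * γ + Real.exp εz * ((1 - γ) * (R + (1 - t) * q)) := by
          rw [hueq]; ring
        have hex : (1 - γ) * (Real.exp εz * (R + (1 - t) * q) + δz)
            = Real.exp εz * ((1 - γ) * (R + (1 - t) * q)) + (1 - γ) * δz := by ring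
        have hδγ : (1 - γ) * δz ≤ δz := by nlinarith
        have hγe : γ ≤ Real.exp εz * γ := le_mul_of_one_le_left hγ0.le hexp1
        calc u' = γ + (1 - γ) * (R' + (1 - t) * q') := hu'eq
          _ ≤ γ + (1 - γ) * (Real.exp εz * (R + (1 - t) * q) + δz) := by linarith
          _ = Real.exp εz * ((1 - γ) * (R + (1 - t) * q)) + ((1 - γ) * δz + γ) := by
              ring
          _ ≤ Real.exp εz * ((1 - γ) * (R + (1 - t) * q)) + (δz + Real.exp εz * γ) := by
              linarith
          _ = Real.exp εz * u + δz := by rw [he2]; ring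
      have h3 : δz ≤ (δz / γ) * u := by
        have hh : (δz / γ) * γ ≤ (δz / γ) * u :=
          mul_le_mul_of_nonneg_left huγ hdg
        have hγδ : (δz / γ) * γ = δz := by field_simp
        linarith
      have h4 : u' ≤ (Real.exp εz + δz / γ) * u := by
        have : (Real.exp εz + δz / γ) * u = Real.exp εz * u + (δz / γ) * u := by ring
        linarith
      have h5b : Real.exp εz + δz / γ ≤ Real.exp εz * (1 + δz / γ) := by
        have hx : 0 ≤ (Real.exp εz - 1) * (δz / γ) :=
          mul_nonneg (by linarith) hdg
        nlinarith
      have h5a : Real.exp εz * (1 + δz / γ) ≤ Real.exp εz * Real.exp (δz / γ) := by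
        have hb := Real.add_one_le_exp (δz / γ)
        exact mul_le_mul_of_nonneg_left (by linarith) (Real.exp_pos εz).le
      have h6 : Real.exp εz * Real.exp (δz / γ) = Real.exp c := by
        rw [← Real.exp_add, hc]
      have h7 : (Real.exp εz + δz / γ) * u ≤ Real.exp c * u := by
        apply mul_le_mul_of_nonneg_right _ hu0.le
        rw [← h6]
        linarith
      linarith
    -- u^{-(η+1)} ≤ exp((η+1)c) u'^{-(η+1)}
    have key2 : u ^ (-(η + 1)) ≤ Real.exp ((η + 1) * c) * u' ^ (-(η + 1)) := by
      have h1 : u' ^ (η + 1) ≤ (Real.exp c * u) ^ (η + 1) :=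
        Real.rpow_le_rpow hu'0.le key1 ha0.le
      have h2 : (Real.exp c * u) ^ (η + 1)
          = Real.exp ((η + 1) * c) * u ^ (η + 1) := by
        rw [Real.mul_rpow (Real.exp_pos c).le hu0.le, ← Real.exp_mul, mul_comm c (η + 1)]
      have hp : 0 < u ^ (η + 1) := Real.rpow_pos_of_pos hu0 _
      have hp' : 0 < u' ^ (η + 1) := Real.rpow_pos_of_pos hu'0 _
      have hE : 0 < Real.exp ((η + 1) * c) := Real.exp_pos _
      rw [Real.rpow_neg hu0.le, Real.rpow_neg hu'0.le]
      rw [← one_div, ← one_div, mul_one_div, div_le_div_iff₀ hp hp']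
      nlinarith
    -- u^{-(η+1)} ≤ γ^{-(η+1)}
    have key3 : u ^ (-(η + 1)) ≤ γ ^ (-(η + 1)) :=
      Real.rpow_le_rpow_of_nonpos hγ0 huγ (by linarith)
    have hupos : 0 < u ^ (-(η + 1)) := Real.rpow_pos_of_pos hu0 _
    have hu'pos : 0 < u' ^ (-(η + 1)) := Real.rpow_pos_of_pos hu'0 _
    -- assemble
    have hqM : q ≤ Real.exp εz * q' + M := by linarith
    have step1 : q * (K * u ^ (-(η + 1)))
        ≤ (Real.exp εz * q' + M) * (K * u ^ (-(η + 1))) := by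
      apply mul_le_mul_of_nonneg_right hqM (by positivity)
    have step2 : Real.exp εz * q' * (K * u ^ (-(η + 1)))
        ≤ Real.exp εz * q' * (K * (Real.exp ((η + 1) * c) * u' ^ (-(η + 1)))) := by
      apply mul_le_mul_of_nonneg_left _ (by positivity)
      exact mul_le_mul_of_nonneg_left key2 hKpos.le
    have step3 : M * (K * u ^ (-(η + 1))) ≤ M * (K * γ ^ (-(η + 1))) := by
      apply mul_le_mul_of_nonneg_left _ hM0
      exact mul_le_mul_of_nonneg_left key3 hKpos.le
    have heε : Real.exp ((η + 2) * εz + (η + 1) * δz / γ)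
        = Real.exp εz * Real.exp ((η + 1) * c) := by
      rw [← Real.exp_add, hεeq]
    calc q * (K * u ^ (-(η + 1)))
        ≤ (Real.exp εz * q' + M) * (K * u ^ (-(η + 1))) := step1
      _ = Real.exp εz * q' * (K * u ^ (-(η + 1))) + M * (K * u ^ (-(η + 1))) := by ring
      _ ≤ Real.exp εz * q' * (K * (Real.exp ((η + 1) * c) * u' ^ (-(η + 1))))
            + M * (K * γ ^ (-(η + 1))) := add_le_add step2 step3
      _ = Real.exp ((η + 2) * εz + (η + 1) * δz / γ)
            * (q' * (K * u' ^ (-(η + 1)))) + M * (K * γ ^ (-(η + 1))) := by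
          rw [heε]; ring
  -- integrate
  have hF1 : G + q ≤ 1 := by nlinarith
  have hF1' : G' + q' ≤ 1 := by nlinarith
  have hint := phi_diff_integral (η := η) hγ0 hγ1 hG0 hq.le hF1
  have hint' := phi_diff_integral (η := η) hγ0 hγ1 hG'0 hq'.le hF1'
  -- integrability of both integrands
  have hcont : ∀ (g0 qq : ℝ), 0 ≤ g0 → 0 ≤ qq → g0 + qq ≤ 1 → ContinuousOn
      (fun t : ℝ => qq * (K * (1 - (1 - γ) * (g0 + t * qq)) ^ (-(η + 1))))
      (Set.uIcc (0:ℝ) 1) := by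
    intro g0 qq hg0 hqq hle
    apply ContinuousOn.mul continuousOn_const
    apply ContinuousOn.mul continuousOn_const
    apply ContinuousOn.rpow_const
    · fun_prop
    · intro t ht
      rw [Set.uIcc_of_le (by norm_num : (0:ℝ) ≤ 1)] at ht
      left
      have h1 : 0 ≤ g0 + t * qq := by nlinarith [ht.1, ht.2]
      have h2 : g0 + t * qq ≤ 1 := by nlinarith [ht.1, ht.2]
      nlinarith
  have hi1 : IntervalIntegrable
      (fun t : ℝ => q * (K * (1 - (1 - γ) * (G + t * q)) ^ (-(η + 1))))
      MeasureTheory.volume 0 1 := (hcont G q hG0 hq.le hF1).intervalIntegrable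
  have hi2 : IntervalIntegrable
      (fun t : ℝ => q' * (K * (1 - (1 - γ) * (G' + t * q')) ^ (-(η + 1))))
      MeasureTheory.volume 0 1 := (hcont G' q' hG'0 hq'.le hF1').intervalIntegrable
  set E : ℝ := Real.exp ((η + 2) * εz + (η + 1) * δz / γ) with hE
  have hi3 : IntervalIntegrable
      (fun t : ℝ => E * (q' * (K * (1 - (1 - γ) * (G' + t * q')) ^ (-(η + 1))))
        + M * (K * γ ^ (-(η + 1)))) MeasureTheory.volume 0 1 :=
    (hi2.const_mul E).add intervalIntegrable_const
  have hmono := intervalIntegral.integral_mono_on (by norm_num : (0:ℝ) ≤ 1) hi1 hi3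
    (fun t ht => hptwise t ht.1 ht.2)
  rw [hint, hint']
  have hrhs : (∫ t in (0:ℝ)..1,
      (E * (q' * (K * (1 - (1 - γ) * (G' + t * q')) ^ (-(η + 1))))
        + M * (K * γ ^ (-(η + 1)))))
      = E * (∫ t in (0:ℝ)..1, q' * (K * (1 - (1 - γ) * (G' + t * q')) ^ (-(η + 1))))
        + M * (K * γ ^ (-(η + 1))) := by
    rw [intervalIntegral.integral_add (hi2.const_mul E) intervalIntegrable_const,
      intervalIntegral.integral_const_mul, intervalIntegral.integral_const]
    norm_num
  rw [hrhs] at hmono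
  exact hmono

section finsets
variable {Y : Type*} [Fintype Y] [LinearOrder Y]

lemma cumLE_split (W : Y → ℝ) (y : Y) : cumLE W y = cumLT W y + W y := by
  rw [cumLE, cumLT]
  have h1 : Finset.univ.filter (fun z => z ≤ y)
      = insert y (Finset.univ.filter (fun z => z < y)) := by
    ext z
    simp [le_iff_lt_or_eq, or_comm]
  rw [h1, Finset.sum_insert (by simp)]
  ring

lemma cum_tail (W : Y → ℝ) (hsum : ∑ z, W z = 1) (y : Y) :
    cumLE W y + ∑ z ∈ Finset.univ.filter (fun z => y < z), W z = 1 := by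
  rw [cumLE]
  have := Finset.sum_filter_add_sum_filter_not Finset.univ (fun z => z ≤ y) W
  have h2 : Finset.univ.filter (fun z => ¬ z ≤ y)
      = Finset.univ.filter (fun z => y < z) := by
    ext z; simp [not_le]
  rw [h2] at this
  rw [this, hsum]

lemma cumLT_nonneg (W : Y → ℝ) (hW : ∀ z, 0 ≤ W z) (y : Y) : 0 ≤ cumLT W y :=
  Finset.sum_nonneg fun z _ => hW z

lemma cumLE_le_one (W : Y → ℝ) (hW : ∀ z, 0 ≤ W z) (hsum : ∑ z, W z = 1) (y : Y) :
    cumLE W y ≤ 1 := by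
  rw [← hsum, cumLE]
  exact Finset.sum_le_sum_of_subset_of_nonneg (Finset.filter_subset _ _)
    (fun z _ _ => hW z)
end finsets


/-- Corollary 5.4: approximate DP guarantee for private selection with a truncated
negative binomial number of candidates. -/
theorem private_selection_negbin_approx_dp
    {Y : Type*} [Fintype Y] [LinearOrder Y]
    (Q Q' : Y → ℝ)
    (hQ_pos : ∀ y, 0 < Q y) (hQ_le : ∀ y, Q y ≤ 1) (hQ_sum : ∑ y, Q y = 1)
    (hQ'_pos : ∀ y, 0 < Q' y) (hQ'_le : ∀ y, Q' y ≤ 1) (hQ'_sum : ∑ y, Q' y = 1)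
    (γ η : ℝ) (hγ : γ ∈ Set.Ioo (0 : ℝ) 1) (hη : -1 < η)
    (m : ℝ) (hm : m = negBinMean η γ)
    (A A' : Y → ℝ)
    (hA : ∀ y, A y = pgf (negBinPMF η γ) (cumLE Q y) - pgf (negBinPMF η γ) (cumLT Q y))
    (hA' : ∀ y, A' y = pgf (negBinPMF η γ) (cumLE Q' y) - pgf (negBinPMF η γ) (cumLT Q' y))
    (ε₀ δ₀ : ℝ) (hε₀ : 0 ≤ ε₀) (hδ₀ : 0 ≤ δ₀)
    (hQDP : ∑ y, max (Q y - Real.exp ε₀ * Q' y) 0 ≤ δ₀)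
    (hQDP' : ∑ y, max (Q' y - Real.exp ε₀ * Q y) 0 ≤ δ₀)
    (ε : ℝ) (hε : ε = (η + 2) * ε₀ + (η + 1) * δ₀ / γ) :
    ∑ y, max (A y - Real.exp ε * A' y) 0 ≤ m * δ₀ := by
  obtain ⟨hγ0, hγ1⟩ := hγ
  have hm' : m = KNB η γ * γ ^ (-(η + 1)) := by rw [hm, negBinMean_eq hγ0 hγ1]
  have hmpos : 0 < m := by
    rw [hm']
    exact mul_pos (KNB_pos hγ0 hγ1) (Real.rpow_pos_of_pos hγ0 _)
  -- per-y bound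
  have hper : ∀ y : Y, A y - Real.exp ε * A' y
      ≤ max (Q y - Real.exp ε₀ * Q' y) 0 * m := by
    intro y
    set G : ℝ := cumLT Q y with hGdef
    set G' : ℝ := cumLT Q' y with hG'def
    set R : ℝ := ∑ z ∈ Finset.univ.filter (fun z => y < z), Q z with hRdef
    set R' : ℝ := ∑ z ∈ Finset.univ.filter (fun z => y < z), Q' z with hR'def
    have hGsplit : cumLE Q y = G + Q y := cumLE_split Q y
    have hG'split : cumLE Q' y = G' + Q' y := cumLE_split Q' y
    have hsum1 : G + Q y + R = 1 := by
      have := cum_tail Q hQ_sum y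
      rw [hGsplit] at this
      linarith
    have hsum1' : G' + Q' y + R' = 1 := by
      have := cum_tail Q' hQ'_sum y
      rw [hG'split] at this
      linarith
    have hG0 : 0 ≤ G := cumLT_nonneg Q (fun z => (hQ_pos z).le) y
    have hG'0 : 0 ≤ G' := cumLT_nonneg Q' (fun z => (hQ'_pos z).le) y
    have hR0 : 0 ≤ R := Finset.sum_nonneg fun z _ => (hQ_pos z).le
    have hR'0 : 0 ≤ R' := Finset.sum_nonneg fun z _ => (hQ'_pos z).le
    have hF1 : G + Q y ≤ 1 := by rw [← hGsplit]; exact cumLE_le_one Q (fun z => (hQ_pos z).le) hQ_sum y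
    have hF1' : G' + Q' y ≤ 1 := by rw [← hG'split]; exact cumLE_le_one Q' (fun z => (hQ'_pos z).le) hQ'_sum y
    have hG1 : G ≤ 1 := by linarith [(hQ_pos y)]
    have hG1' : G' ≤ 1 := by linarith [(hQ'_pos y)]
    -- rewrite A, A' via PhiNB
    have hAy : A y = PhiNB η γ (G + Q y) - PhiNB η γ G := by
      rw [hA y, hGsplit, pgf_negBin_eq hγ0 hγ1 (by linarith [(hQ_pos y)]) hF1,
        pgf_negBin_eq hγ0 hγ1 hG0 hG1]
    have hA'y : A' y = PhiNB η γ (G' + Q' y) - PhiNB η γ G' := by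
      rw [hA' y, hG'split, pgf_negBin_eq hγ0 hγ1 (by linarith [(hQ'_pos y)]) hF1',
        pgf_negBin_eq hγ0 hγ1 hG'0 hG1']
    -- tail DP bound
    have htail : ∀ t : ℝ, 0 ≤ t → t ≤ 1 →
        R' + (1 - t) * Q' y ≤ Real.exp ε₀ * (R + (1 - t) * Q y) + δ₀ := by
      intro t ht0 ht1
      set T : Finset Y := Finset.univ.filter (fun z => y < z) with hT
      have hRsub : R' - Real.exp ε₀ * R = ∑ z ∈ T, (Q' z - Real.exp ε₀ * Q z) := by
        rw [hR'def, hRdef, Finset.sum_sub_distrib, Finset.mul_sum]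
      have hAle : ∑ z ∈ T, (Q' z - Real.exp ε₀ * Q z)
          ≤ ∑ z ∈ T, max (Q' z - Real.exp ε₀ * Q z) 0 :=
        Finset.sum_le_sum fun z _ => le_max_left _ _
      have hB : (1 - t) * (Q' y - Real.exp ε₀ * Q y)
          ≤ max (Q' y - Real.exp ε₀ * Q y) 0 := by
        rcases le_or_gt (Q' y - Real.exp ε₀ * Q y) 0 with h | h
        · have : (1 - t) * (Q' y - Real.exp ε₀ * Q y) ≤ 0 :=
            mul_nonpos_of_nonneg_of_nonpos (by linarith) h
          exact this.trans (le_max_right _ _)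
        · calc (1 - t) * (Q' y - Real.exp ε₀ * Q y)
              ≤ 1 * (Q' y - Real.exp ε₀ * Q y) :=
                mul_le_mul_of_nonneg_right (by linarith) h.le
            _ = Q' y - Real.exp ε₀ * Q y := one_mul _
            _ ≤ max _ _ := le_max_left _ _
      have hC : max (Q' y - Real.exp ε₀ * Q y) 0
            + ∑ z ∈ T, max (Q' z - Real.exp ε₀ * Q z) 0 ≤ δ₀ := by
        have hyT : y ∉ T := by simp [hT]
        rw [show max (Q' y - Real.exp ε₀ * Q y) 0
            + ∑ z ∈ T, max (Q' z - Real.exp ε₀ * Q z) 0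
            = ∑ z ∈ insert y T, max (Q' z - Real.exp ε₀ * Q z) 0 from
          (Finset.sum_insert (f := fun z => max (Q' z - Real.exp ε₀ * Q z) 0) hyT).symm]
        refine le_trans (Finset.sum_le_sum_of_subset_of_nonneg
          (Finset.subset_univ _) (fun z _ _ => le_max_right _ _)) hQDP'
      have hexpand : R' + (1 - t) * Q' y - Real.exp ε₀ * (R + (1 - t) * Q y)
          = (R' - Real.exp ε₀ * R) + (1 - t) * (Q' y - Real.exp ε₀ * Q y) := by ring
      have := hRsub ▸ hAle
      linarith [hexpand, this, hB, hC]
    have hkey := per_point hγ0 hγ1 hη hε₀ hδ₀ (hQ_pos y) (hQ'_pos y) hG0 hG'0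
      hR0 hR'0 hsum1 hsum1' (le_max_left _ _) (le_max_right _ _) htail
    rw [hAy, hA'y, hε, hm']
    linarith [hkey]
  -- sum up
  calc ∑ y, max (A y - Real.exp ε * A' y) 0
      ≤ ∑ y, max (Q y - Real.exp ε₀ * Q' y) 0 * m := by
        apply Finset.sum_le_sum
        intro y _
        exact max_le (hper y) (by positivity)
    _ = (∑ y, max (Q y - Real.exp ε₀ * Q' y) 0) * m := by
        rw [Finset.sum_mul]
    _ ≤ δ₀ * m := by
        apply mul_le_mul_of_nonneg_right hQDP hmpos.le
    _ = m * δ₀ := mul_comm _ _
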